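/- Label dominance soundness: define a label at node i as a tuple L = (c, e, d, V) with c ∈ ℝ (reduced cost), e ∈ ℝ (earliest arrival time), d ∈ ℕ (accumulated demand), V a subset of a finite node set (extendable nodes). Define extension of L along arc (i,j) with travel-plus-service time t ≥ 0, arc cost c_{ij} ∈ ℝ, and demand q_j ≥ 0 by: e' = e + t, c' = c + e' + c_{ij}, d' = d + q_j, V' ⊆ V \ {j} determined by resource-feasibility conditions that are monotone (larger e or d gives a smaller feasible V'). Suppose L¹ = (c¹, e¹, d¹, V¹) and L² = (c², e², d², V²) are labels at the same node with c¹ ≤ c², e¹ ≤ e², d¹ ≤ d², and V¹ ⊇ V². Then for every feasible completion of L² to a full route (a sequence of extensions ending at the depot), the same completion applied to L¹ is feasible and yields total cost no greater than that of L²'s completion. -/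

import Mathlib

/-- A label of the label-setting algorithm: reduced cost, earliest arrival
time, accumulated demand, and set of extendable nodes. -/
structure DPLabel (ι : Type*) where
  c : ℝ
  e : ℝ
  d : ℕ
  V : Set ι

/-- Extension of a label along an arc to node `j`: arrival time `e + t j`,
cost increment `e' + cc j` (cumulative-arrival objective plus dual arc cost),
demand increment `q j`, and extendable set shrunk by resource feasibility. -/
def DPLabel.extend {ι : Type*} (t cc : ι → ℝ) (q : ι → ℕ)
    (Vfeas : ℝ → ℕ → Set ι) (L : DPLabel ι) (j : ι) : DPLabel ι :=
  ⟨L.c + (L.e + t j) + cc j, L.e + t j, L.d + q j,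
    (L.V \ {j}) ∩ Vfeas (L.e + t j) (L.d + q j)⟩

/-- Extending a label along a whole sequence of nodes. -/
def DPLabel.extendList {ι : Type*} (t cc : ι → ℝ) (q : ι → ℕ)
    (Vfeas : ℝ → ℕ → Set ι) (L : DPLabel ι) : List ι → DPLabel ι
  | [] => L
  | j :: js => (L.extend t cc q Vfeas j).extendList t cc q Vfeas js

/-- Feasibility of a completion: each node visited must be extendable. -/
def DPLabel.feasibleList {ι : Type*} (t cc : ι → ℝ) (q : ι → ℕ)
    (Vfeas : ℝ → ℕ → Set ι) (L : DPLabel ι) : List ι → Prop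
  | [] => True
  | j :: js => j ∈ L.V ∧ (L.extend t cc q Vfeas j).feasibleList t cc q Vfeas js

/-- Soundness of the dominance rules of the label-setting algorithm: if L¹
dominates L² (smaller cost, earlier arrival, smaller demand, larger extendable
set), then every feasible completion of L² is feasible for L¹ and yields a
total cost no greater than that of L². -/
theorem stmt_9 {ι : Type*} (t cc : ι → ℝ) (q : ι → ℕ)
    (ht : ∀ j, 0 ≤ t j)
    (Vfeas : ℝ → ℕ → Set ι)
    (hVfeas : ∀ (e₁ e₂ : ℝ) (d₁ d₂ : ℕ), e₁ ≤ e₂ → d₁ ≤ d₂ →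
      Vfeas e₂ d₂ ⊆ Vfeas e₁ d₁)
    (L₁ L₂ : DPLabel ι)
    (hc : L₁.c ≤ L₂.c) (he : L₁.e ≤ L₂.e) (hd : L₁.d ≤ L₂.d)
    (hV : L₂.V ⊆ L₁.V)
    (js : List ι) (hfeas : L₂.feasibleList t cc q Vfeas js) :
    L₁.feasibleList t cc q Vfeas js ∧
      (L₁.extendList t cc q Vfeas js).c ≤ (L₂.extendList t cc q Vfeas js).c := by
  induction js generalizing L₁ L₂ with
  | nil => exact ⟨trivial, hc⟩
  | cons j js ih =>
    obtain ⟨hjV, hrest⟩ := hfeas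
    have he' : (L₁.extend t cc q Vfeas j).e ≤ (L₂.extend t cc q Vfeas j).e :=
      add_le_add_left he _
    have hd' : (L₁.extend t cc q Vfeas j).d ≤ (L₂.extend t cc q Vfeas j).d :=
      add_le_add_left hd _
    have hc' : (L₁.extend t cc q Vfeas j).c ≤ (L₂.extend t cc q Vfeas j).c := by
      simp only [DPLabel.extend]
      linarith
    have hV' : (L₂.extend t cc q Vfeas j).V ⊆ (L₁.extend t cc q Vfeas j).V := by
      simp only [DPLabel.extend]
      exact Set.inter_subset_inter (Set.diff_subset_diff_left hV)
        (hVfeas _ _ _ _ (add_le_add_left he _) (add_le_add_left hd _))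
    obtain ⟨hf, hcost⟩ := ih _ _ hc' he' hd' hV' hrest
    exact ⟨⟨hV hjV, hf⟩, hcost⟩
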